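/- Let δ > 0, c > 0, and let g : ℝ → ℝ be continuous with g(s₂) − g(s₁) ≥ c(s₂ − s₁) for all −δ ≤ s₁ ≤ s₂ ≤ δ. Then ∫₀¹ g(δ sin(2πt))·sin(2πt) dt ≥ cδ/2. (Quantitative strengthening of the monotone-dither lemma; applied with g = h′ it yields the derivative lower bound ∂b₁,δ/∂x ≥ cδ used to prove local exponential stability in Lemma 1, item b.) -/

import Mathlib

open MeasureTheory Real

/-- Quantitative strengthening of the monotone-dither lemma. -/
theorem stmt15
    (δ c : ℝ) (hδ : 0 < δ) (hc : 0 < c) (g : ℝ → ℝ) (hg : Continuous g)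
    (hstr : ∀ s₁ s₂ : ℝ, -δ ≤ s₁ → s₁ ≤ s₂ → s₂ ≤ δ → c * (s₂ - s₁) ≤ g s₂ - g s₁) :
    c * δ / 2 ≤
      ∫ t in (0:ℝ)..1, g (δ * Real.sin (2 * Real.pi * t)) * Real.sin (2 * Real.pi * t) := by
  set f : ℝ → ℝ := fun t => g (δ * Real.sin (2 * Real.pi * t)) * Real.sin (2 * Real.pi * t) with hf
  have hfc : Continuous f := (hg.comp (by fun_prop)).mul (by fun_prop)
  have hsplit : ∫ t in (0:ℝ)..1, f t = (∫ t in (0:ℝ)..(1/2), f t) + ∫ t in (1/2:ℝ)..1, f t := by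
    rw [intervalIntegral.integral_add_adjacent_intervals] <;> exact hfc.intervalIntegrable _ _
  have hshift : (∫ t in (1/2:ℝ)..1, f t) = ∫ t in (0:ℝ)..(1/2), f (t + 1/2) := by
    rw [intervalIntegral.integral_comp_add_right]; norm_num
  have hcomb : (∫ t in (0:ℝ)..1, f t)
      = ∫ t in (0:ℝ)..(1/2), (f t + f (t + 1/2)) := by
    rw [hsplit, hshift]
    exact (intervalIntegral.integral_add (hfc.intervalIntegrable _ _)
      ((hfc.comp (continuous_id.add continuous_const)).intervalIntegrable _ _)).symm
  have hsin : ∫ t in (0:ℝ)..(1/2), Real.sin (2 * Real.pi * t) ^ 2 = 1/4 := by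
    have h2π : (2 * Real.pi) ≠ 0 := by positivity
    rw [intervalIntegral.integral_comp_mul_left (fun x => Real.sin x ^ 2) h2π]
    have : 2 * Real.pi * (1/2) = Real.pi := by ring
    rw [this, mul_zero, integral_sin_sq]
    simp [Real.sin_pi]
    field_simp
    ring
  have key : ∀ t ∈ Set.Icc (0:ℝ) (1/2),
      2 * c * δ * Real.sin (2 * Real.pi * t) ^ 2 ≤ f t + f (t + 1/2) := by
    intro t ht
    set s := Real.sin (2 * Real.pi * t) with hs
    have hs0 : 0 ≤ s := Real.sin_nonneg_of_nonneg_of_le_pi (by nlinarith [ht.1, Real.pi_pos])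
      (by nlinarith [ht.2, Real.pi_pos])
    have hs1 : s ≤ 1 := Real.sin_le_one _
    have h1 : c * (δ * s - -(δ * s)) ≤ g (δ * s) - g (-(δ * s)) := by
      apply hstr <;> nlinarith
    have hfv : f (t + 1/2) = g (-(δ * s)) * (-s) := by
      have h2 : 2 * Real.pi * (t + 1/2) = 2 * Real.pi * t + Real.pi := by ring
      simp only [hf, h2, Real.sin_add_pi, mul_neg]
      rfl
    rw [hfv]
    simp only [hf]
    rw [← hs]
    clear_value s
    nlinarith [mul_le_mul_of_nonneg_right h1 hs0]
  have hmono : (∫ t in (0:ℝ)..(1/2), 2 * c * δ * Real.sin (2 * Real.pi * t) ^ 2)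
      ≤ ∫ t in (0:ℝ)..(1/2), (f t + f (t + 1/2)) := by
    apply intervalIntegral.integral_mono_on (by norm_num)
    · exact (by fun_prop : Continuous fun t => 2 * c * δ * Real.sin (2 * Real.pi * t) ^ 2).intervalIntegrable _ _
    · exact (hfc.add (hfc.comp (continuous_id.add continuous_const))).intervalIntegrable _ _
    · exact key
  rw [hcomb]
  calc c * δ / 2 = 2 * c * δ * (1/4) := by ring
    _ = ∫ t in (0:ℝ)..(1/2), 2 * c * δ * Real.sin (2 * Real.pi * t) ^ 2 := by
        rw [intervalIntegral.integral_const_mul, hsin]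
    _ ≤ _ := hmono
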